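/- For an n×n max-plus matrix A whose precedence graph has no positive-weight circuit, the solution set of A ⊗ x ⪯ x over x ∈ ℝⁿ equals {A* ⊗ u : u ∈ ℝⁿ}, where A* = ⊕_{i≥0} A^i is the Kleene star (here A⁰ = identity with 0 diagonal and -∞ off-diagonal). -/

import Mathlib

/-- Max-plus matrix product over `ℝ̄`. -/
noncomputable def mpMulE {m n p : ℕ} (A : Matrix (Fin m) (Fin n) EReal)
    (B : Matrix (Fin n) (Fin p) EReal) : Matrix (Fin m) (Fin p) EReal :=
  fun i j => ⨆ k, A i k + B k j

/-- Max-plus identity matrix. -/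
noncomputable def mpIdE (n : ℕ) : Matrix (Fin n) (Fin n) EReal :=
  fun i j => if i = j then 0 else ⊥

/-- Max-plus matrix power. -/
noncomputable def mpPowE {n : ℕ} (A : Matrix (Fin n) (Fin n) EReal) :
    ℕ → Matrix (Fin n) (Fin n) EReal
  | 0 => mpIdE n
  | r + 1 => mpMulE A (mpPowE A r)

/-- Kleene star `A* = ⊕_{r ≥ 0} Aʳ` (entrywise supremum of all max-plus powers). -/
noncomputable def mpStar {n : ℕ} (A : Matrix (Fin n) (Fin n) EReal) :
    Matrix (Fin n) (Fin n) EReal :=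
  fun i j => ⨆ r : ℕ, mpPowE A r i j

lemma my_add_iSup {ι : Type*} [Nonempty ι] {a : EReal} (ha : a ≠ ⊤) (f : ι → EReal) :
    a + ⨆ i, f i = ⨆ i, a + f i := by
  refine le_antisymm ?_ (iSup_le fun i => add_le_add_right (le_iSup f i) a)
  induction a with
  | bot => simp
  | coe r =>
    rw [add_comm, ← EReal.le_sub_iff_add_le (Or.inl (EReal.coe_ne_bot r))
      (Or.inl (EReal.coe_ne_top r))]
    refine iSup_le fun i => ?_
    rw [EReal.le_sub_iff_add_le (Or.inl (EReal.coe_ne_bot r)) (Or.inl (EReal.coe_ne_top r)),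
      add_comm]
    exact le_iSup (fun i => (r : EReal) + f i) i
  | top => exact absurd rfl ha

lemma my_pow_sol {n : ℕ} (A : Matrix (Fin n) (Fin n) EReal) (x : Fin n → ℝ)
    (hx : ∀ i, (⨆ j, A i j + (x j : EReal)) ≤ (x i : EReal)) :
    ∀ r i j, mpPowE A r i j + (x j : EReal) ≤ (x i : EReal) := by
  intro r
  induction r with
  | zero =>
    intro i j
    by_cases h : i = j
    · subst h; simp [mpPowE, mpIdE]
    · simp [mpPowE, mpIdE, h]
  | succ r ih =>
    intro i j
    have hne : Nonempty (Fin n) := ⟨i⟩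
    show (⨆ k, A i k + mpPowE A r k j) + (x j : EReal) ≤ (x i : EReal)
    rw [add_comm, my_add_iSup (EReal.coe_ne_top (x j))]
    refine (iSup_le fun k => ?_).trans (hx i)
    calc (x j : EReal) + (A i k + mpPowE A r k j)
        = A i k + (mpPowE A r k j + (x j : EReal)) := by
          rw [add_comm (x j : EReal), add_assoc]
      _ ≤ A i k + (x k : EReal) := add_le_add_right (ih k j) _
      _ ≤ ⨆ j', A i j' + (x j' : EReal) := le_iSup (fun j' => A i j' + (x j' : EReal)) k

lemma my_star_step {n : ℕ} (A : Matrix (Fin n) (Fin n) EReal) (hA : ∀ i j, A i j ≠ ⊤)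
    (i j k : Fin n) : A i j + mpStar A j k ≤ mpStar A i k := by
  show A i j + ⨆ r : ℕ, mpPowE A r j k ≤ _
  rw [my_add_iSup (hA i j)]
  refine iSup_le fun r => ?_
  calc A i j + mpPowE A r j k
      ≤ ⨆ k', A i k' + mpPowE A r k' k := le_iSup (fun k' => A i k' + mpPowE A r k' k) j
    _ = mpPowE A (r + 1) i k := rfl
    _ ≤ ⨆ s : ℕ, mpPowE A s i k := le_iSup (fun s => mpPowE A s i k) (r + 1)

/-- If the precedence graph of an `n×n` max-plus matrix `A` (entries in `ℝ ∪ {-∞}`) has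
no positive-weight circuit, then the solution set of `A ⊗ x ⪯ x` over `x ∈ ℝⁿ` is
`{A* ⊗ u : u ∈ ℝⁿ}`. -/
theorem stmt10 {n : ℕ} (A : Matrix (Fin n) (Fin n) EReal) (hA : ∀ i j, A i j ≠ ⊤)
    (hnc : ¬ ∃ (r : ℕ) (ρ : ℕ → Fin n), 1 ≤ r ∧ ρ r = ρ 0 ∧
        0 < ∑ t ∈ Finset.range r, A (ρ (t + 1)) (ρ t)) :
    ∀ x : Fin n → ℝ, (∀ i, (⨆ j, A i j + (x j : EReal)) ≤ (x i : EReal)) ↔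
      ∃ u : Fin n → ℝ, ∀ i, (x i : EReal) = ⨆ j, mpStar A i j + (u j : EReal) := by
  intro x
  constructor
  · intro hx
    refine ⟨x, fun i => le_antisymm ?_ ?_⟩
    · have h0 : (x i : EReal) = mpIdE n i i + (x i : EReal) := by simp [mpIdE]
      rw [h0]
      refine le_trans (add_le_add_left ?_ _)
        (le_iSup (fun j => mpStar A i j + (x j : EReal)) i)
      exact le_iSup (fun r => mpPowE A r i i) 0
    · refine iSup_le fun j => ?_
      show (⨆ r : ℕ, mpPowE A r i j) + (x j : EReal) ≤ (x i : EReal)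
      rw [add_comm, my_add_iSup (EReal.coe_ne_top (x j))]
      refine iSup_le fun r => ?_
      rw [add_comm]
      exact my_pow_sol A x hx r i j
  · rintro ⟨u, hu⟩ i
    rw [hu i]
    refine iSup_le fun j => ?_
    have hne : Nonempty (Fin n) := ⟨j⟩
    rw [hu j, my_add_iSup (hA i j)]
    refine iSup_le fun k => ?_
    calc A i j + (mpStar A j k + (u k : EReal))
        = (A i j + mpStar A j k) + (u k : EReal) := (add_assoc _ _ _).symm
      _ ≤ mpStar A i k + (u k : EReal) := add_le_add_left (my_star_step A hA i j k) _
      _ ≤ ⨆ j', mpStar A i j' + (u j' : EReal) :=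
          le_iSup (fun j' => mpStar A i j' + (u j' : EReal)) k
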